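/- Let G be a temporal graph in the sense of Kempe–Kleinberg–Kumar, i.e., a fixed vertex set V with a sequence of edge sets (E_i)_{i ∈ ℕ}, each E_i a set of unordered pairs of V. Then G determines a unique (up to isomorphism) cumulative graph narrative Ĝ on the poset of closed intervals of ℕ, defined on instantaneous intervals by Ĝ([t,t]) := (V, E_t) and on longer intervals by iterated pushouts over the inclusions of the maximal common subgraph; in particular Ĝ([a,b]) has vertex set V and edge set (a disjoint-union-based accumulation of) ⋃_{t ∈ [a,b]} E_t. -/

import Mathlib

open CategoryTheory CategoryTheory.Limits

/-- Closed intervals `[a,b] ⊆ ℕ` (with `a ≤ b`), ordered by inclusion. -/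
def NatInt : Type := {p : ℕ × ℕ // p.1 ≤ p.2}

instance : PartialOrder NatInt where
  le I J := J.val.1 ≤ I.val.1 ∧ I.val.2 ≤ J.val.2
  le_refl _ := ⟨le_rfl, le_rfl⟩
  le_trans _ _ _ h h' := ⟨le_trans h'.1 h.1, le_trans h.2 h'.2⟩
  le_antisymm I J h h' := Subtype.ext (Prod.ext (le_antisymm h'.1 h.1) (le_antisymm h.2 h'.2))

/-- The closed interval `[a,b]`. -/
def NatInt.mk (a b : ℕ) (h : a ≤ b) : NatInt := ⟨(a, b), h⟩

lemma NatInt.mk_le_mk {a b c d : ℕ} {h : a ≤ b} {h' : c ≤ d}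
    (h1 : c ≤ a) (h2 : b ≤ d) : NatInt.mk a b h ≤ NatInt.mk c d h' := ⟨h1, h2⟩

variable {D : Type*} [Category D]

/-- The sheaf condition (persistent narrative) for a presheaf on the poset of
closed intervals of `ℕ`, w.r.t. the Johnstone coverage. -/
def IsPersistentNarr (F : NatIntᵒᵖ ⥤ D) : Prop :=
  ∀ (a p b : ℕ) (hap : a ≤ p) (hpb : p ≤ b),
    IsPullback
      (F.map (homOfLE (NatInt.mk_le_mk (h := hap) (h' := hap.trans hpb) le_rfl hpb)).op)
      (F.map (homOfLE (NatInt.mk_le_mk (h := hpb) (h' := hap.trans hpb) hap le_rfl)).op)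
      (F.map (homOfLE (NatInt.mk_le_mk (h := le_rfl) (h' := hap) hap le_rfl)).op)
      (F.map (homOfLE (NatInt.mk_le_mk (h := le_rfl) (h' := hpb) le_rfl hpb)).op)

/-- The cosheaf condition (cumulative narrative). -/
def IsCumulativeNarr (G : NatInt ⥤ D) : Prop :=
  ∀ (a p b : ℕ) (hap : a ≤ p) (hpb : p ≤ b),
    IsPushout
      (G.map (homOfLE (NatInt.mk_le_mk (h := le_rfl) (h' := hap) hap le_rfl)))
      (G.map (homOfLE (NatInt.mk_le_mk (h := le_rfl) (h' := hpb) le_rfl hpb)))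
      (G.map (homOfLE (NatInt.mk_le_mk (h := hap) (h' := hap.trans hpb) le_rfl hpb)))
      (G.map (homOfLE (NatInt.mk_le_mk (h := hpb) (h' := hap.trans hpb) hap le_rfl)))


universe u

/-- The category of directed multigraphs: `Set`-valued functors on the
two-object schema `{E ⇉ V}` (realized as the walking parallel pair). -/
abbrev Gr : Type (u + 1) := WalkingParallelPair ⥤ Type u

/-- The edges of a directed multigraph. -/
abbrev Gr.Edges (G : Gr.{u}) : Type u := G.obj WalkingParallelPair.zero

/-- The vertices of a directed multigraph. -/
abbrev Gr.Verts (G : Gr.{u}) : Type u := G.obj WalkingParallelPair.one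

/-- The source of an edge. -/
def Gr.src (G : Gr.{u}) (e : G.Edges) : G.Verts := G.map WalkingParallelPairHom.left e

/-- The target of an edge. -/
def Gr.tgt (G : Gr.{u}) (e : G.Edges) : G.Verts := G.map WalkingParallelPairHom.right e

/-- A multigraph is complete if every pair of distinct vertices is joined by
at least one edge. -/
def Gr.IsComplete (G : Gr.{u}) : Prop :=
  ∀ u v : G.Verts, u ≠ v →
    ∃ e : G.Edges, (G.src e = u ∧ G.tgt e = v) ∨ (G.src e = v ∧ G.tgt e = u)

/-- The accumulation over the interval `[a,b]` of a Kempe–Kleinberg–Kumar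
temporal graph `(V, (E_i))`: vertex set `V`, and as edges the disjoint-union
accumulation of the (unordered) edges active at the times `t ∈ [a,b]`
(each realized by its ordered representatives). -/
def accumGraph (V : Type) (Es : ℕ → Set (Sym2 V)) (a b : ℕ) : Gr.{0} :=
  parallelPair
    (TypeCat.ofHom (fun e : {x : (V × V) × ℕ // x.2 ∈ Set.Icc a b ∧ Sym2.mk x.1.1 x.1.2 ∈ Es x.2} =>
      e.1.1.1))
    (TypeCat.ofHom (fun e : {x : (V × V) × ℕ // x.2 ∈ Set.Icc a b ∧ Sym2.mk x.1.1 x.1.2 ∈ Es x.2} => e.1.1.2))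

namespace KKKaux

open WalkingParallelPair

instance natIntHomSubsingleton (I J : NatInt) : Subsingleton (I ⟶ J) :=
  inferInstanceAs (Subsingleton (ULift (PLift (I ≤ J))))

lemma map_comp_eq {D : Type*} [Category D] (F : NatInt ⥤ D) {I J K : NatInt}
    (f : I ⟶ J) (g : J ⟶ K) (h : I ⟶ K) : F.map f ≫ F.map g = F.map h := by
  rw [← F.map_comp, Subsingleton.elim (f ≫ g) h]

/-- A pushout square in a functor category is detected pointwise. -/
lemma isPushout_of_pointwise {K : Type*} [Category K] {C : Type*} [Category C]
    {S A B X : K ⥤ C} {f : S ⟶ A} {g : S ⟶ B} {h : A ⟶ X} {k : B ⟶ X}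
    (comm : f ≫ h = g ≫ k)
    (t : ∀ x : K, IsColimit (PushoutCocone.mk (h.app x) (k.app x)
      (by rw [← NatTrans.comp_app, ← NatTrans.comp_app, comm]) :
        PushoutCocone (f.app x) (g.app x))) :
    IsPushout f g h k :=
  ⟨⟨comm⟩, ⟨evaluationJointlyReflectsColimits _ (fun x =>
    (isColimitMapCoconePushoutCoconeEquiv ((evaluation K C).obj x) comm).symm (t x))⟩⟩

section TypePushout

variable {T : Type} (Sp Ap Bp Xp : T → Prop)
  (hSA : ∀ x, Sp x → Ap x) (hSB : ∀ x, Sp x → Bp x)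
  (hAX : ∀ x, Ap x → Xp x) (hBX : ∀ x, Bp x → Xp x)
  (hX : ∀ x, Xp x → Ap x ∨ Bp x) (hS : ∀ x, Ap x → Bp x → Sp x)

/-- The union square of subtypes is a pushout in `Type`. -/
noncomputable def subtypeIsPushout :
    IsColimit (PushoutCocone.mk (C := Type)
      (f := TypeCat.ofHom fun s : {x // Sp x} => (⟨s.1, hSA _ s.2⟩ : {x // Ap x}))
      (g := TypeCat.ofHom fun s : {x // Sp x} => (⟨s.1, hSB _ s.2⟩ : {x // Bp x}))
      (TypeCat.ofHom fun a : {x // Ap x} => (⟨a.1, hAX _ a.2⟩ : {x // Xp x}))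
      (TypeCat.ofHom fun b : {x // Bp x} => (⟨b.1, hBX _ b.2⟩ : {x // Xp x})) rfl) := by
  classical
  refine PushoutCocone.IsColimit.mk
    (f := TypeCat.ofHom fun s : {x // Sp x} => (⟨s.1, hSA _ s.2⟩ : {x // Ap x}))
    (g := TypeCat.ofHom fun s : {x // Sp x} => (⟨s.1, hSB _ s.2⟩ : {x // Bp x}))
    (inl := TypeCat.ofHom fun a : {x // Ap x} => (⟨a.1, hAX _ a.2⟩ : {x // Xp x}))
    (inr := TypeCat.ofHom fun b : {x // Bp x} => (⟨b.1, hBX _ b.2⟩ : {x // Xp x})) rfl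
    (fun s => TypeCat.ofHom fun x : {x // Xp x} => if h : Ap x.1 then s.inl ⟨x.1, h⟩ else
      s.inr ⟨x.1, ((hX _ x.2).resolve_left h)⟩) (fun s => ?_) (fun s => ?_)
    (fun s m hl hr => ?_)
  · ext a
    exact dif_pos a.2
  · ext b
    show (if h : Ap b.1 then s.inl ⟨b.1, h⟩ else _) = s.inr b
    split
    · next h =>
      have := types_congr_hom s.condition ⟨b.1, hS _ h b.2⟩
      exact this
    · rfl
  · ext x
    show m x = (if h : Ap x.1 then s.inl ⟨x.1, h⟩ else s.inr ⟨x.1, ((hX _ x.2).resolve_left h)⟩)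
    split
    · next h => exact types_congr_hom hl ⟨x.1, h⟩
    · next h => exact types_congr_hom hr ⟨x.1, (hX _ x.2).resolve_left h⟩

/-- The identity square on a type is a pushout in `Type`. -/
noncomputable def idIsPushout (W : Type) :
    IsColimit (PushoutCocone.mk (C := Type) (f := TypeCat.ofHom (id (α := W)))
      (g := TypeCat.ofHom (id (α := W)))
      (TypeCat.ofHom (id (α := W))) (TypeCat.ofHom (id (α := W))) rfl) :=
  PushoutCocone.IsColimit.mk rfl (fun s => s.inl) (fun s => by ext x; rfl)
    (fun s => by ext x; exact types_congr_hom s.condition x)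
    (fun s m hl _ => by ext x; exact types_congr_hom hl x)

end TypePushout

end KKKaux
namespace KKKaux

section Ghat
variable (V : Type) (Es : ℕ → Set (Sym2 V))

/-- The canonical cumulative narrative of a KKK temporal graph. -/
def GhatF : NatInt ⥤ Gr.{0} where
  obj I := accumGraph V Es I.1.1 I.1.2
  map {I J} f := parallelPairHom _ _ _ _
    (TypeCat.ofHom fun e => ⟨e.1, ⟨⟨le_trans (leOfHom f).1 e.2.1.1, le_trans e.2.1.2 (leOfHom f).2⟩, e.2.2⟩⟩)
    (TypeCat.ofHom id) rfl rfl
  map_id I := by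
    apply NatTrans.ext; funext x
    cases x <;> rfl
  map_comp f g := by
    apply NatTrans.ext; funext x
    cases x <;> rfl

lemma GhatF_cumulative : IsCumulativeNarr (GhatF V Es) := by
  intro a p b hap hpb
  apply isPushout_of_pointwise
    (comm := (map_comp_eq _ _ _ (homOfLE (NatInt.mk_le_mk hap hpb))).trans
      (map_comp_eq _ _ _ _).symm)
  · intro x
    cases x with
    | zero =>
      exact subtypeIsPushout
        (fun x : (V × V) × ℕ => x.2 ∈ Set.Icc p p ∧ Sym2.mk x.1.1 x.1.2 ∈ Es x.2)
        (fun x => x.2 ∈ Set.Icc a p ∧ Sym2.mk x.1.1 x.1.2 ∈ Es x.2)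
        (fun x => x.2 ∈ Set.Icc p b ∧ Sym2.mk x.1.1 x.1.2 ∈ Es x.2)
        (fun x => x.2 ∈ Set.Icc a b ∧ Sym2.mk x.1.1 x.1.2 ∈ Es x.2)
        (fun x h => ⟨⟨le_trans hap h.1.1, le_trans h.1.2 le_rfl⟩, h.2⟩)
        (fun x h => ⟨⟨h.1.1, le_trans h.1.2 hpb⟩, h.2⟩)
        (fun x h => ⟨⟨h.1.1, le_trans h.1.2 hpb⟩, h.2⟩)
        (fun x h => ⟨⟨le_trans hap h.1.1, h.1.2⟩, h.2⟩)
        (fun x h => by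
          rcases le_or_gt x.2 p with h' | h'
          · exact Or.inl ⟨⟨h.1.1, h'⟩, h.2⟩
          · exact Or.inr ⟨⟨le_of_lt h', h.1.2⟩, h.2⟩)
        (fun x hA hB => ⟨⟨hB.1.1, hA.1.2⟩, hA.2⟩)
    | one => exact idIsPushout V

end Ghat

end KKKaux
namespace KKKaux
section Unique

variable {D : Type*} [Category D] {Gh' Gh : NatInt ⥤ D}

/-- A morphism between intervals. -/
def hmor {a b c d : ℕ} (hab : a ≤ b) (hcd : c ≤ d) (h1 : c ≤ a) (h2 : b ≤ d) :
    NatInt.mk a b hab ⟶ NatInt.mk c d hcd :=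
  homOfLE (NatInt.mk_le_mk (h := hab) (h' := hcd) h1 h2)

/-- The inclusion of the right endpoint. -/
def rho (I : NatInt) : NatInt.mk I.1.2 I.1.2 le_rfl ⟶ I :=
  homOfLE (NatInt.mk_le_mk (h := le_rfl) (h' := I.2) I.2 le_rfl)

lemma eq_conj {X' X Y' Y : D} (e0 : X' = X) (e1 : Y' = Y) {f' : X' ⟶ Y'} {f : X ⟶ Y}
    (h : f' ≫ eqToHom e1 = eqToHom e0 ≫ f) : f ≫ eqToHom e1.symm = eqToHom e0.symm ≫ f' := by
  subst e0; subst e1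
  simp only [eqToHom_refl, Category.comp_id, Category.id_comp] at h ⊢
  exact h.symm

lemma iso_conj {X' X Y' Y : D} (e0 : X' = X) (e : Y' ≅ Y) {f' : X' ⟶ Y'} {f : X ⟶ Y}
    (h : f' ≫ e.hom = eqToHom e0 ≫ f) : f ≫ e.inv = eqToHom e0.symm ≫ f' := by
  subst e0
  simp only [eqToHom_refl, Category.id_comp] at h ⊢
  rw [← h, Category.assoc, e.hom_inv_id, Category.comp_id]

/-- The hypotheses of the uniqueness statement, bundled. -/
structure Setup (Gh' Gh : NatInt ⥤ D) : Prop where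
  hC' : IsCumulativeNarr Gh'
  hC : IsCumulativeNarr Gh
  hobj0 : ∀ t : ℕ, Gh'.obj (NatInt.mk t t le_rfl) = Gh.obj (NatInt.mk t t le_rfl)
  hobj1 : ∀ t : ℕ, Gh'.obj (NatInt.mk t (t+1) (Nat.le_succ t)) =
    Gh.obj (NatInt.mk t (t+1) (Nat.le_succ t))
  hmap0 : ∀ t : ℕ,
    Gh'.map (homOfLE (NatInt.mk_le_mk (h := le_rfl)
      (h' := Nat.le_succ t) le_rfl (Nat.le_succ t))) ≫
        eqToHom (hobj1 t) =
    eqToHom (hobj0 t) ≫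
      Gh.map (homOfLE (NatInt.mk_le_mk (h := le_rfl)
        (h' := Nat.le_succ t) le_rfl (Nat.le_succ t)))
  hmap1 : ∀ t : ℕ,
    Gh'.map (homOfLE (NatInt.mk_le_mk (h := le_rfl)
      (h' := Nat.le_succ t) (Nat.le_succ t) le_rfl)) ≫
        eqToHom (hobj1 t) =
    eqToHom (hobj0 (t+1)) ≫
      Gh.map (homOfLE (NatInt.mk_le_mk (h := le_rfl)
        (h' := Nat.le_succ t) (Nat.le_succ t) le_rfl))

variable (S : Setup Gh' Gh)
include S

lemma Setup.obj1' (p b : ℕ) (hpb : p ≤ b) (hb1 : b = p + 1) :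
    Gh'.obj (NatInt.mk p b hpb) = Gh.obj (NatInt.mk p b hpb) := by
  subst hb1; exact S.hobj1 p

lemma Setup.map0' (p b : ℕ) (hpb : p ≤ b) (hb1 : b = p + 1) :
    Gh'.map (hmor le_rfl hpb le_rfl hpb) ≫ eqToHom (S.obj1' p b hpb hb1) =
      eqToHom (S.hobj0 p) ≫ Gh.map (hmor le_rfl hpb le_rfl hpb) := by
  subst hb1; exact S.hmap0 p

lemma Setup.map1' (p b : ℕ) (hpb : p ≤ b) (hb1 : b = p + 1) :
    Gh'.map (hmor le_rfl hpb hpb le_rfl) ≫ eqToHom (S.obj1' p b hpb hb1) =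
      eqToHom (S.hobj0 b) ≫ Gh.map (hmor le_rfl hpb hpb le_rfl) := by
  subst hb1; exact S.hmap1 p

lemma pushL {a p b : ℕ} (hap : a ≤ p) (hpb : p ≤ b) (hab : a ≤ b) :
    IsPushout (Gh'.map (hmor le_rfl hap hap le_rfl))
      (Gh'.map (hmor le_rfl hpb le_rfl hpb))
      (Gh'.map (hmor hap hab le_rfl hpb))
      (Gh'.map (hmor hpb hab hap le_rfl)) := S.hC' a p b hap hpb

lemma pushR {a p b : ℕ} (hap : a ≤ p) (hpb : p ≤ b) (hab : a ≤ b) :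
    IsPushout (Gh.map (hmor le_rfl hap hap le_rfl))
      (Gh.map (hmor le_rfl hpb le_rfl hpb))
      (Gh.map (hmor hap hab le_rfl hpb))
      (Gh.map (hmor hpb hab hap le_rfl)) := S.hC a p b hap hpb

section Step

variable {p b : ℕ} (hpb : p ≤ b) (hb1 : b = p + 1) {a : ℕ} (hap : a ≤ p) (hab : a ≤ b)
  (ep : Gh'.obj (NatInt.mk a p hap) ≅ Gh.obj (NatInt.mk a p hap))
  (hρ : Gh'.map (hmor le_rfl hap hap le_rfl) ≫ ep.hom =
    eqToHom (S.hobj0 p) ≫ Gh.map (hmor le_rfl hap hap le_rfl))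

/-- The forward map on `[a,b]` induced by pushout from the one on `[a, b-1]`. -/
noncomputable def stepHom : Gh'.obj (NatInt.mk a b hab) ⟶ Gh.obj (NatInt.mk a b hab) :=
  (pushL S hap hpb hab).desc
    (ep.hom ≫ Gh.map (hmor hap hab le_rfl hpb))
    (eqToHom (S.obj1' p b hpb hb1) ≫ Gh.map (hmor hpb hab hap le_rfl))
    (by
      rw [← Category.assoc, hρ, Category.assoc,
        map_comp_eq Gh (hmor le_rfl hap hap le_rfl) (hmor hap hab le_rfl hpb)
          (hmor le_rfl hab hap hpb),
        ← Category.assoc, S.map0' p b hpb hb1, Category.assoc,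
        map_comp_eq Gh (hmor le_rfl hpb le_rfl hpb) (hmor hpb hab hap le_rfl)
          (hmor le_rfl hab hap hpb)])

lemma stepHom_inl :
    Gh'.map (hmor hap hab le_rfl hpb) ≫ stepHom S hpb hb1 hap hab ep hρ =
      ep.hom ≫ Gh.map (hmor hap hab le_rfl hpb) :=
  (pushL S hap hpb hab).inl_desc _ _ _

lemma stepHom_inr :
    Gh'.map (hmor hpb hab hap le_rfl) ≫ stepHom S hpb hb1 hap hab ep hρ =
      eqToHom (S.obj1' p b hpb hb1) ≫ Gh.map (hmor hpb hab hap le_rfl) :=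
  (pushL S hap hpb hab).inr_desc _ _ _

/-- The backward map. -/
noncomputable def stepInv : Gh.obj (NatInt.mk a b hab) ⟶ Gh'.obj (NatInt.mk a b hab) :=
  (pushR S hap hpb hab).desc
    (ep.inv ≫ Gh'.map (hmor hap hab le_rfl hpb))
    (eqToHom (S.obj1' p b hpb hb1).symm ≫ Gh'.map (hmor hpb hab hap le_rfl))
    (by
      rw [← Category.assoc, iso_conj (S.hobj0 p) ep hρ, Category.assoc,
        map_comp_eq Gh' (hmor le_rfl hap hap le_rfl) (hmor hap hab le_rfl hpb)
          (hmor le_rfl hab hap hpb),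
        ← Category.assoc, eq_conj (S.hobj0 p) (S.obj1' p b hpb hb1) (S.map0' p b hpb hb1),
        Category.assoc,
        map_comp_eq Gh' (hmor le_rfl hpb le_rfl hpb) (hmor hpb hab hap le_rfl)
          (hmor le_rfl hab hap hpb)])

lemma stepInv_inl :
    Gh.map (hmor hap hab le_rfl hpb) ≫ stepInv S hpb hb1 hap hab ep hρ =
      ep.inv ≫ Gh'.map (hmor hap hab le_rfl hpb) :=
  (pushR S hap hpb hab).inl_desc _ _ _

lemma stepInv_inr :
    Gh.map (hmor hpb hab hap le_rfl) ≫ stepInv S hpb hb1 hap hab ep hρ =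
      eqToHom (S.obj1' p b hpb hb1).symm ≫ Gh'.map (hmor hpb hab hap le_rfl) :=
  (pushR S hap hpb hab).inr_desc _ _ _

/-- The induced isomorphism on `[a,b]`. -/
noncomputable def stepIso : Gh'.obj (NatInt.mk a b hab) ≅ Gh.obj (NatInt.mk a b hab) where
  hom := stepHom S hpb hb1 hap hab ep hρ
  inv := stepInv S hpb hb1 hap hab ep hρ
  hom_inv_id := by
    apply (pushL S hap hpb hab).hom_ext
    · rw [← Category.assoc, stepHom_inl, Category.assoc, stepInv_inl, ← Category.assoc,
        ep.hom_inv_id, Category.id_comp, Category.comp_id]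
    · rw [← Category.assoc, stepHom_inr, Category.assoc, stepInv_inr, ← Category.assoc,
        eqToHom_trans, eqToHom_refl, Category.id_comp, Category.comp_id]
  inv_hom_id := by
    apply (pushR S hap hpb hab).hom_ext
    · rw [← Category.assoc, stepInv_inl, Category.assoc, stepHom_inl, ← Category.assoc,
        ep.inv_hom_id, Category.id_comp, Category.comp_id]
    · rw [← Category.assoc, stepInv_inr, Category.assoc, stepHom_inr, ← Category.assoc,
        eqToHom_trans, eqToHom_refl, Category.id_comp, Category.comp_id]

lemma stepIso_rho :
    Gh'.map (hmor le_rfl hab hab le_rfl) ≫ (stepIso S hpb hb1 hap hab ep hρ).hom =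
      eqToHom (S.hobj0 b) ≫ Gh.map (hmor le_rfl hab hab le_rfl) := by
  rw [show Gh'.map (hmor le_rfl hab hab le_rfl) =
      Gh'.map (hmor le_rfl hpb hpb le_rfl) ≫ Gh'.map (hmor hpb hab hap le_rfl) from
    (map_comp_eq Gh' _ _ _).symm, Category.assoc]
  show Gh'.map _ ≫ Gh'.map _ ≫ stepHom S hpb hb1 hap hab ep hρ = _
  rw [stepHom_inr, ← Category.assoc, S.map1' p b hpb hb1, Category.assoc,
    map_comp_eq Gh (hmor le_rfl hpb hpb le_rfl) (hmor hpb hab hap le_rfl)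
      (hmor le_rfl hab hab le_rfl)]

end Step

/-- The isomorphism on an interval together with its right-endpoint compatibility. -/
def PSig (I : NatInt) : Type _ :=
  {e : Gh'.obj I ≅ Gh.obj I //
    Gh'.map (rho I) ≫ e.hom = eqToHom (S.hobj0 I.1.2) ≫ Gh.map (rho I)}

/-- The bundled step. -/
noncomputable def stepSig {p b : ℕ} (hpb : p ≤ b) (hb1 : b = p + 1) {a : ℕ}
    (hap : a ≤ p) (hab : a ≤ b) (prev : PSig S (NatInt.mk a p hap)) :
    PSig S (NatInt.mk a b hab) :=
  ⟨stepIso S hpb hb1 hap hab prev.1 prev.2, stepIso_rho S hpb hb1 hap hab prev.1 prev.2⟩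

/-- The recursive construction of the componentwise isomorphism. -/
noncomputable def eCore : (n : ℕ) → (I : NatInt) → I.1.2 - I.1.1 = n → PSig S I
  | 0, I, h => by
    have h0 : I.1.2 - I.1.1 = 0 := h
    have hle : I.1.1 ≤ I.1.2 := I.2
    have hba : I.1.2 = I.1.1 := by omega
    have hI : I = NatInt.mk I.1.1 I.1.1 le_rfl :=
      Subtype.ext (Prod.ext rfl (show I.1.2 = I.1.1 from hba))
    have hM : NatInt.mk I.1.2 I.1.2 le_rfl = I :=
      (congrArg (fun t => NatInt.mk t t le_rfl) hba).trans hI.symm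
    refine ⟨eqToIso (by rw [hI]; exact S.hobj0 I.1.1), ?_⟩
    rw [Subsingleton.elim (rho I)
      (show NatInt.mk I.1.2 I.1.2 le_rfl ⟶ I from eqToHom hM)]
    simp only [eqToIso.hom, eqToHom_map, eqToHom_trans]
  | (n+1), I, h => by
    have h' : I.1.2 - I.1.1 = n + 1 := h
    have hle : I.1.1 ≤ I.1.2 := I.2
    exact stepSig S (p := I.1.2 - 1) (b := I.1.2) (by omega) (by omega)
      (a := I.1.1) (by omega) I.2
      (eCore n (NatInt.mk I.1.1 (I.1.2 - 1) (by omega))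
        (by show I.1.2 - 1 - I.1.1 = n; omega))

lemma eCore_irrel (n n' : ℕ) (I : NatInt) (h : I.1.2 - I.1.1 = n) (h' : I.1.2 - I.1.1 = n') :
    eCore S n I h = eCore S n' I h' := by
  subst h; subst h'; rfl

/-- The componentwise isomorphism data. -/
noncomputable def ECore (I : NatInt) : PSig S I := eCore S (I.1.2 - I.1.1) I rfl

/-- The componentwise isomorphism. -/
noncomputable def Eiso (I : NatInt) : Gh'.obj I ≅ Gh.obj I := (ECore S I).1

lemma Eiso_singleton (t : ℕ) :
    (Eiso S (NatInt.mk t t le_rfl)).hom = eqToHom (S.hobj0 t) := by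
  show (eCore S (t - t) (NatInt.mk t t le_rfl) rfl).1.hom = _
  rw [eCore_irrel S (t - t) 0 _ rfl (Nat.sub_self t)]
  rfl

lemma Eiso_step {p b : ℕ} (hpb : p ≤ b) (hb1 : b = p + 1) {a : ℕ} (hap : a ≤ p) (hab : a ≤ b) :
    ECore S (NatInt.mk a b hab) = stepSig S hpb hb1 hap hab (ECore S (NatInt.mk a p hap)) := by
  subst hb1
  show eCore S ((p+1) - a) (NatInt.mk a (p+1) hab) rfl = _
  rw [eCore_irrel S ((p+1) - a) ((p - a) + 1) _ rfl
    (show (p+1) - a = (p - a) + 1 by omega)]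
  exact congrArg (stepSig S hpb rfl hap hab)
    (eCore_irrel S (p - a) ((NatInt.mk a p hap).1.2 - (NatInt.mk a p hap).1.1)
      (NatInt.mk a p hap) rfl rfl)

lemma natRho (I : NatInt) (f : NatInt.mk I.1.2 I.1.2 le_rfl ⟶ I) :
    Gh'.map f ≫ (Eiso S I).hom = (Eiso S (NatInt.mk I.1.2 I.1.2 le_rfl)).hom ≫ Gh.map f := by
  rw [Subsingleton.elim f (rho I), Eiso_singleton S I.1.2]
  exact (ECore S I).2

lemma natR {a b b' : ℕ} (hab : a ≤ b) (hab' : a ≤ b') (hb' : b' = b + 1)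
    (f : NatInt.mk a b hab ⟶ NatInt.mk a b' hab') :
    Gh'.map f ≫ (Eiso S (NatInt.mk a b' hab')).hom =
      (Eiso S (NatInt.mk a b hab)).hom ≫ Gh.map f := by
  have hb : b ≤ b' := by omega
  rw [Subsingleton.elim f (hmor hab hab' le_rfl hb),
    show Eiso S (NatInt.mk a b' hab') =
        (stepSig S hb hb' hab hab' (ECore S (NatInt.mk a b hab))).1 from
      congrArg Subtype.val (Eiso_step S hb hb' hab hab')]
  exact stepHom_inl S hb hb' hab hab'
    (ECore S (NatInt.mk a b hab)).1 (ECore S (NatInt.mk a b hab)).2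

end Unique
end KKKaux
namespace KKKaux
section Unique2

variable {D : Type*} [Category D] {Gh' Gh : NatInt ⥤ D} (S : Setup Gh' Gh)

lemma natL (n : ℕ) : ∀ (a' b : ℕ) (ha'b : a' ≤ b) (hab : a' + 1 ≤ b), b - a' ≤ n →
    ∀ (f : NatInt.mk (a'+1) b hab ⟶ NatInt.mk a' b ha'b),
    Gh'.map f ≫ (Eiso S (NatInt.mk a' b ha'b)).hom =
      (Eiso S (NatInt.mk (a'+1) b hab)).hom ≫ Gh.map f := by
  induction n with
  | zero => intro a' b h1 h2 h3 f; omega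
  | succ n IH =>
    intro a' b h1 h2 hn f
    by_cases hba : b = a' + 1
    · subst hba
      exact natRho S (NatInt.mk a' (a'+1) h1) f
    · -- b ≥ a' + 2; use the pushout decomposition at p = b - 1
      have hp2 : a' + 1 ≤ b - 1 := by omega
      have hp1 : a' ≤ b - 1 := by omega
      have hpb : b - 1 ≤ b := by omega
      have hb1 : b = (b - 1) + 1 := by omega
      apply (pushL S (a := a'+1) (p := b-1) (b := b) hp2 hpb h2).hom_ext
      · -- inl leg
        calc Gh'.map (hmor hp2 h2 le_rfl hpb) ≫ Gh'.map f ≫ (Eiso S (NatInt.mk a' b h1)).hom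
            = (Gh'.map (hmor hp2 h2 le_rfl hpb) ≫ Gh'.map f) ≫ _ := (Category.assoc _ _ _).symm
          _ = (Gh'.map (hmor hp2 hp1 (Nat.le_succ a') le_rfl) ≫
                Gh'.map (hmor hp1 h1 le_rfl hpb)) ≫ (Eiso S (NatInt.mk a' b h1)).hom := by
              rw [map_comp_eq Gh' (hmor hp2 h2 le_rfl hpb) f (hmor hp2 h1 (Nat.le_succ a') hpb),
                map_comp_eq Gh' (hmor hp2 hp1 (Nat.le_succ a') le_rfl)
                  (hmor hp1 h1 le_rfl hpb) (hmor hp2 h1 (Nat.le_succ a') hpb)]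
          _ = Gh'.map (hmor hp2 hp1 (Nat.le_succ a') le_rfl) ≫
                (Gh'.map (hmor hp1 h1 le_rfl hpb) ≫ (Eiso S (NatInt.mk a' b h1)).hom) :=
              Category.assoc _ _ _
          _ = Gh'.map (hmor hp2 hp1 (Nat.le_succ a') le_rfl) ≫
                ((Eiso S (NatInt.mk a' (b-1) hp1)).hom ≫ Gh.map (hmor hp1 h1 le_rfl hpb)) := by
              rw [natR S hp1 h1 hb1 (hmor hp1 h1 le_rfl hpb)]
          _ = (Gh'.map (hmor hp2 hp1 (Nat.le_succ a') le_rfl) ≫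
                (Eiso S (NatInt.mk a' (b-1) hp1)).hom) ≫ Gh.map (hmor hp1 h1 le_rfl hpb) :=
              (Category.assoc _ _ _).symm
          _ = ((Eiso S (NatInt.mk (a'+1) (b-1) hp2)).hom ≫
                Gh.map (hmor hp2 hp1 (Nat.le_succ a') le_rfl)) ≫
                Gh.map (hmor hp1 h1 le_rfl hpb) := by
              rw [IH a' (b-1) hp1 hp2 (by omega) (hmor hp2 hp1 (Nat.le_succ a') le_rfl)]
          _ = (Eiso S (NatInt.mk (a'+1) (b-1) hp2)).hom ≫
                Gh.map (hmor hp2 h1 (Nat.le_succ a') hpb) := by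
              rw [Category.assoc, map_comp_eq Gh (hmor hp2 hp1 (Nat.le_succ a') le_rfl)
                (hmor hp1 h1 le_rfl hpb) (hmor hp2 h1 (Nat.le_succ a') hpb)]
          _ = (Eiso S (NatInt.mk (a'+1) (b-1) hp2)).hom ≫
                Gh.map (hmor hp2 h2 le_rfl hpb) ≫ Gh.map f := by
              rw [map_comp_eq Gh (hmor hp2 h2 le_rfl hpb) f (hmor hp2 h1 (Nat.le_succ a') hpb)]
          _ = ((Eiso S (NatInt.mk (a'+1) (b-1) hp2)).hom ≫
                Gh.map (hmor hp2 h2 le_rfl hpb)) ≫ Gh.map f := (Category.assoc _ _ _).symm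
          _ = (Gh'.map (hmor hp2 h2 le_rfl hpb) ≫ (Eiso S (NatInt.mk (a'+1) b h2)).hom) ≫
                Gh.map f := by rw [natR S hp2 h2 hb1 (hmor hp2 h2 le_rfl hpb)]
          _ = Gh'.map (hmor hp2 h2 le_rfl hpb) ≫ (Eiso S (NatInt.mk (a'+1) b h2)).hom ≫
                Gh.map f := Category.assoc _ _ _
      · -- inr leg
        have e1 : Eiso S (NatInt.mk (a'+1) b h2) =
            (stepSig S hpb hb1 hp2 h2 (ECore S (NatInt.mk (a'+1) (b-1) hp2))).1 :=
          congrArg Subtype.val (Eiso_step S hpb hb1 hp2 h2)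
        have e2 : Eiso S (NatInt.mk a' b h1) =
            (stepSig S hpb hb1 hp1 h1 (ECore S (NatInt.mk a' (b-1) hp1))).1 :=
          congrArg Subtype.val (Eiso_step S hpb hb1 hp1 h1)
        calc Gh'.map (hmor hpb h2 hp2 le_rfl) ≫ Gh'.map f ≫ (Eiso S (NatInt.mk a' b h1)).hom
            = (Gh'.map (hmor hpb h2 hp2 le_rfl) ≫ Gh'.map f) ≫ _ := (Category.assoc _ _ _).symm
          _ = Gh'.map (hmor hpb h1 hp1 le_rfl) ≫ (Eiso S (NatInt.mk a' b h1)).hom := by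
              rw [map_comp_eq Gh' (hmor hpb h2 hp2 le_rfl) f (hmor hpb h1 hp1 le_rfl)]
          _ = eqToHom (S.obj1' (b-1) b hpb hb1) ≫ Gh.map (hmor hpb h1 hp1 le_rfl) := by
              rw [e2]
              exact stepHom_inr S hpb hb1 hp1 h1
                (ECore S (NatInt.mk a' (b-1) hp1)).1 (ECore S (NatInt.mk a' (b-1) hp1)).2
          _ = eqToHom (S.obj1' (b-1) b hpb hb1) ≫
                Gh.map (hmor hpb h2 hp2 le_rfl) ≫ Gh.map f := by
              rw [map_comp_eq Gh (hmor hpb h2 hp2 le_rfl) f (hmor hpb h1 hp1 le_rfl)]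
          _ = (eqToHom (S.obj1' (b-1) b hpb hb1) ≫ Gh.map (hmor hpb h2 hp2 le_rfl)) ≫
                Gh.map f := (Category.assoc _ _ _).symm
          _ = (Gh'.map (hmor hpb h2 hp2 le_rfl) ≫ (Eiso S (NatInt.mk (a'+1) b h2)).hom) ≫
                Gh.map f := by
              rw [e1]
              exact congrArg (fun z => z ≫ Gh.map f)
                (stepHom_inr S hpb hb1 hp2 h2 (ECore S (NatInt.mk (a'+1) (b-1) hp2)).1
                  (ECore S (NatInt.mk (a'+1) (b-1) hp2)).2).symm
          _ = Gh'.map (hmor hpb h2 hp2 le_rfl) ≫ (Eiso S (NatInt.mk (a'+1) b h2)).hom ≫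
                Gh.map f := Category.assoc _ _ _

lemma natAll (n : ℕ) : ∀ (I J : NatInt) (f : I ⟶ J),
    (I.1.1 - J.1.1) + (J.1.2 - I.1.2) ≤ n →
    Gh'.map f ≫ (Eiso S J).hom = (Eiso S I).hom ≫ Gh.map f := by
  induction n with
  | zero =>
    intro I J f hn
    have hle := leOfHom f
    have hIJ : I = J := by
      apply Subtype.ext; apply Prod.ext
      · exact le_antisymm (by omega) hle.1
      · exact le_antisymm hle.2 (by omega)
    subst hIJ
    rw [Subsingleton.elim f (𝟙 I)]
    simp
  | succ n IH =>
    intro I J f hn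
    have hle := leOfHom f
    obtain ⟨⟨a, b⟩, hab⟩ := I
    obtain ⟨⟨c, d⟩, hcd⟩ := J
    have hca : c ≤ a := hle.1
    have hbd : b ≤ d := hle.2
    have hn' : (a - c) + (d - b) ≤ n + 1 := hn
    show Gh'.map f ≫ (Eiso S (NatInt.mk c d hcd)).hom =
      (Eiso S (NatInt.mk a b hab)).hom ≫ Gh.map f
    change NatInt.mk a b hab ⟶ NatInt.mk c d hcd at f
    by_cases h2 : b < d
    · -- factor through [c, d-1]
      have hcd1 : c ≤ d - 1 := by omega
      have hbd1 : b ≤ d - 1 := by omega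
      calc Gh'.map f ≫ (Eiso S (NatInt.mk c d hcd)).hom
          = (Gh'.map (hmor hab hcd1 hca hbd1) ≫ Gh'.map (hmor hcd1 hcd le_rfl (by omega))) ≫
              (Eiso S (NatInt.mk c d hcd)).hom := by
            rw [map_comp_eq Gh' (hmor hab hcd1 hca hbd1) (hmor hcd1 hcd le_rfl (by omega))
              (f : NatInt.mk a b hab ⟶ NatInt.mk c d hcd)]
        _ = Gh'.map (hmor hab hcd1 hca hbd1) ≫ (Gh'.map (hmor hcd1 hcd le_rfl (by omega)) ≫
              (Eiso S (NatInt.mk c d hcd)).hom) := Category.assoc _ _ _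
        _ = Gh'.map (hmor hab hcd1 hca hbd1) ≫ ((Eiso S (NatInt.mk c (d-1) hcd1)).hom ≫
              Gh.map (hmor hcd1 hcd le_rfl (by omega))) := by
            rw [natR S hcd1 hcd (by omega) (hmor hcd1 hcd le_rfl (by omega))]
        _ = (Gh'.map (hmor hab hcd1 hca hbd1) ≫ (Eiso S (NatInt.mk c (d-1) hcd1)).hom) ≫
              Gh.map (hmor hcd1 hcd le_rfl (by omega)) := (Category.assoc _ _ _).symm
        _ = ((Eiso S (NatInt.mk a b hab)).hom ≫ Gh.map (hmor hab hcd1 hca hbd1)) ≫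
              Gh.map (hmor hcd1 hcd le_rfl (by omega)) := by
            rw [IH (NatInt.mk a b hab) (NatInt.mk c (d-1) hcd1)
              (hmor hab hcd1 hca hbd1) (by show a - c + (d - 1 - b) ≤ n; omega)]
        _ = (Eiso S (NatInt.mk a b hab)).hom ≫ Gh.map f := by
            rw [Category.assoc, map_comp_eq Gh (hmor hab hcd1 hca hbd1)
              (hmor hcd1 hcd le_rfl (by omega)) (f : NatInt.mk a b hab ⟶ NatInt.mk c d hcd)]
    · -- b = d; if also a = c then I = J else factor through [c+1, d]
      by_cases h3 : c < a
      · have hc1a : c + 1 ≤ a := h3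
        have hc1d : c + 1 ≤ d := by omega
        calc Gh'.map f ≫ (Eiso S (NatInt.mk c d hcd)).hom
            = (Gh'.map (hmor hab hc1d hc1a hbd) ≫
                Gh'.map (hmor hc1d hcd (Nat.le_succ c) le_rfl)) ≫
                (Eiso S (NatInt.mk c d hcd)).hom := by
              rw [map_comp_eq Gh' (hmor hab hc1d hc1a hbd)
                (hmor hc1d hcd (Nat.le_succ c) le_rfl)
                (f : NatInt.mk a b hab ⟶ NatInt.mk c d hcd)]
          _ = Gh'.map (hmor hab hc1d hc1a hbd) ≫
                (Gh'.map (hmor hc1d hcd (Nat.le_succ c) le_rfl) ≫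
                (Eiso S (NatInt.mk c d hcd)).hom) := Category.assoc _ _ _
          _ = Gh'.map (hmor hab hc1d hc1a hbd) ≫
                ((Eiso S (NatInt.mk (c+1) d hc1d)).hom ≫
                Gh.map (hmor hc1d hcd (Nat.le_succ c) le_rfl)) := by
              rw [natL S (d - c) c d hcd hc1d le_rfl (hmor hc1d hcd (Nat.le_succ c) le_rfl)]
          _ = (Gh'.map (hmor hab hc1d hc1a hbd) ≫ (Eiso S (NatInt.mk (c+1) d hc1d)).hom) ≫
                Gh.map (hmor hc1d hcd (Nat.le_succ c) le_rfl) := (Category.assoc _ _ _).symm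
          _ = ((Eiso S (NatInt.mk a b hab)).hom ≫ Gh.map (hmor hab hc1d hc1a hbd)) ≫
                Gh.map (hmor hc1d hcd (Nat.le_succ c) le_rfl) := by
              rw [IH (NatInt.mk a b hab) (NatInt.mk (c+1) d hc1d)
                (hmor hab hc1d hc1a hbd) (by show a - (c+1) + (d - b) ≤ n; omega)]
          _ = (Eiso S (NatInt.mk a b hab)).hom ≫ Gh.map f := by
              rw [Category.assoc, map_comp_eq Gh (hmor hab hc1d hc1a hbd)
                (hmor hc1d hcd (Nat.le_succ c) le_rfl)
                (f : NatInt.mk a b hab ⟶ NatInt.mk c d hcd)]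
      · have hac : a = c := by omega
        have hbd' : b = d := by omega
        subst hac; subst hbd'
        rw [Subsingleton.elim (α := NatInt.mk a b hab ⟶ NatInt.mk a b hcd) f
          (show NatInt.mk a b hab ⟶ NatInt.mk a b hcd from
            eqToHom (Subtype.ext rfl))]
        simp only [eqToHom_map, eqToHom_refl, Functor.map_id, Category.id_comp,
          Category.comp_id]
        show Gh'.map (𝟙 (NatInt.mk a b hab)) ≫ (Eiso S (NatInt.mk a b hab)).hom =
          (Eiso S (NatInt.mk a b hab)).hom ≫ Gh.map (𝟙 (NatInt.mk a b hab))
        simp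

/-- The natural isomorphism. -/
noncomputable def finalIso : Gh' ≅ Gh :=
  NatIso.ofComponents (fun I => Eiso S I)
    (fun {I J} f => natAll S ((I.1.1 - J.1.1) + (J.1.2 - I.1.2)) I J f le_rfl)

end Unique2
end KKKaux

/-- A Kempe–Kleinberg–Kumar temporal graph `(V, (E_i)_{i ∈ ℕ})` determines a
unique-up-to-isomorphism cumulative graph narrative on the poset of closed
intervals of ℕ, whose value on `[a,b]` is the accumulated graph with vertex
set `V` and edge set the disjoint-union accumulation of `⋃_{t ∈ [a,b]} E_t`. -/
theorem kkk_determines_cumulative_narrative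
    (V : Type) (Es : ℕ → Set (Sym2 V)) :
    ∃ Ghat : NatInt ⥤ Gr.{0}, IsCumulativeNarr Ghat ∧
      (∀ (a b : ℕ) (h : a ≤ b),
        Nonempty (Ghat.obj (NatInt.mk a b h) ≅ accumGraph V Es a b)) ∧
      (∀ Ghat' : NatInt ⥤ Gr.{0}, IsCumulativeNarr Ghat' →
        ∀ (hobj0 : ∀ t : ℕ, Ghat'.obj (NatInt.mk t t le_rfl) =
            Ghat.obj (NatInt.mk t t le_rfl))
          (hobj1 : ∀ t : ℕ, Ghat'.obj (NatInt.mk t (t+1) (Nat.le_succ t)) =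
            Ghat.obj (NatInt.mk t (t+1) (Nat.le_succ t))),
          (∀ t : ℕ,
            Ghat'.map (homOfLE (NatInt.mk_le_mk (h := le_rfl)
              (h' := Nat.le_succ t) le_rfl (Nat.le_succ t))) ≫
                eqToHom (hobj1 t) =
            eqToHom (hobj0 t) ≫
              Ghat.map (homOfLE (NatInt.mk_le_mk (h := le_rfl)
                (h' := Nat.le_succ t) le_rfl (Nat.le_succ t)))) →
          (∀ t : ℕ,
            Ghat'.map (homOfLE (NatInt.mk_le_mk (h := le_rfl)
              (h' := Nat.le_succ t) (Nat.le_succ t) le_rfl)) ≫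
                eqToHom (hobj1 t) =
            eqToHom (hobj0 (t+1)) ≫
              Ghat.map (homOfLE (NatInt.mk_le_mk (h := le_rfl)
                (h' := Nat.le_succ t) (Nat.le_succ t) le_rfl))) →
          Nonempty (Ghat' ≅ Ghat)) := by
  refine ⟨KKKaux.GhatF V Es, KKKaux.GhatF_cumulative V Es, fun a b h => ⟨Iso.refl _⟩, ?_⟩
  intro Ghat' hcn' hobj0 hobj1 hm0 hm1
  exact ⟨KKKaux.finalIso (Gh' := Ghat') (Gh := KKKaux.GhatF V Es)
    ⟨hcn', KKKaux.GhatF_cumulative V Es, hobj0, hobj1, hm0, hm1⟩⟩
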